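/- On ℝ⁸ with coordinates (x₁, …, x₈), consider the eight vector fields giving the coadjoint representation of sl(3,ℝ) (written as component lists with respect to ∂/∂x₁, …, ∂/∂x₈): X₁ = (0, −x₂, −2x₃, x₄, 0, −x₆, 2x₇, x₈), X₂ = (x₂, 0, 0, x₅−x₁, −x₂, −x₃, x₈, 0), X₃ = (2x₃, 0, 0, x₆, x₃, 0, −x₁, −x₂), X₄ = (−x₄, −x₅+x₁, −x₆, 0, x₄, 0, 0, x₇), X₅ = (0, x₂, −x₃, −x₄, 0, −2x₆, x₇, 2x₈), X₆ = (x₆, x₃, 0, 0, 2x₆, 0, −x₄, −x₅), X₇ = (−2x₇, −x₈, x₁, 0, −x₇, x₄, 0, 0), X₈ = (−x₈, 0, x₂, −x₇, −2x₈, x₅, 0, 0). Then the polynomial I₁ = x₅² + x₁² − x₁x₅ + 3x₇x₃ + 3x₈x₆ + 3x₂x₄ is a joint invariant: X_k I₁ = 0 on ℝ⁸ for every k = 1, …, 8. -/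

import Mathlib

/-- The action of a vector field `X` on a smooth function `f`:
`(X f)(q) = Df(q)(X(q))`. -/
noncomputable def vAct {n : ℕ} (X : (Fin n → ℝ) → (Fin n → ℝ))
    (f : (Fin n → ℝ) → ℝ) : (Fin n → ℝ) → ℝ :=
  fun q => fderiv ℝ f q (X q)

/-- The eight fundamental vector fields of the coadjoint representation of
`sl(3, ℝ)` on `ℝ⁸` (0-indexed coordinates `x 0, …, x 7` for `x₁, …, x₈`). -/
noncomputable def sl3CoadX : Fin 8 → (Fin 8 → ℝ) → (Fin 8 → ℝ) :=
  ![fun x => ![0, -x 1, -2 * x 2, x 3, 0, -x 5, 2 * x 6, x 7],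
    fun x => ![x 1, 0, 0, x 4 - x 0, -x 1, -x 2, x 7, 0],
    fun x => ![2 * x 2, 0, 0, x 5, x 2, 0, -x 0, -x 1],
    fun x => ![-x 3, -x 4 + x 0, -x 5, 0, x 3, 0, 0, x 6],
    fun x => ![0, x 1, -x 2, -x 3, 0, -2 * x 5, x 6, 2 * x 7],
    fun x => ![x 5, x 2, 0, 0, 2 * x 5, 0, -x 3, -x 4],
    fun x => ![-2 * x 6, -x 7, x 0, 0, -x 6, x 3, 0, 0],
    fun x => ![-x 7, 0, x 1, -x 6, -2 * x 7, x 4, 0, 0]]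


private lemma vec8_0m {α : Type*} (a b c d e f g h : α) (hlt : 0 < 8) : ![a,b,c,d,e,f,g,h] ⟨0, hlt⟩ = a := rfl
private lemma vec8_1m {α : Type*} (a b c d e f g h : α) (hlt : 1 < 8) : ![a,b,c,d,e,f,g,h] ⟨1, hlt⟩ = b := rfl
private lemma vec8_2m {α : Type*} (a b c d e f g h : α) (hlt : 2 < 8) : ![a,b,c,d,e,f,g,h] ⟨2, hlt⟩ = c := rfl
private lemma vec8_3m {α : Type*} (a b c d e f g h : α) (hlt : 3 < 8) : ![a,b,c,d,e,f,g,h] ⟨3, hlt⟩ = d := rfl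
private lemma vec8_4m {α : Type*} (a b c d e f g h : α) (hlt : 4 < 8) : ![a,b,c,d,e,f,g,h] ⟨4, hlt⟩ = e := rfl
private lemma vec8_5m {α : Type*} (a b c d e f g h : α) (hlt : 5 < 8) : ![a,b,c,d,e,f,g,h] ⟨5, hlt⟩ = f := rfl
private lemma vec8_6m {α : Type*} (a b c d e f g h : α) (hlt : 6 < 8) : ![a,b,c,d,e,f,g,h] ⟨6, hlt⟩ = g := rfl
private lemma vec8_7m {α : Type*} (a b c d e f g h : α) (hlt : 7 < 8) : ![a,b,c,d,e,f,g,h] ⟨7, hlt⟩ = h := rfl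
private lemma vec8_0 {α : Type*} (a b c d e f g h : α) : ![a,b,c,d,e,f,g,h] 0 = a := rfl
private lemma vec8_1 {α : Type*} (a b c d e f g h : α) : ![a,b,c,d,e,f,g,h] 1 = b := rfl
private lemma vec8_2 {α : Type*} (a b c d e f g h : α) : ![a,b,c,d,e,f,g,h] 2 = c := rfl
private lemma vec8_3 {α : Type*} (a b c d e f g h : α) : ![a,b,c,d,e,f,g,h] 3 = d := rfl
private lemma vec8_4 {α : Type*} (a b c d e f g h : α) : ![a,b,c,d,e,f,g,h] 4 = e := rfl
private lemma vec8_5 {α : Type*} (a b c d e f g h : α) : ![a,b,c,d,e,f,g,h] 5 = f := rfl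
private lemma vec8_6 {α : Type*} (a b c d e f g h : α) : ![a,b,c,d,e,f,g,h] 6 = g := rfl
private lemma vec8_7 {α : Type*} (a b c d e f g h : α) : ![a,b,c,d,e,f,g,h] 7 = h := rfl

set_option maxHeartbeats 1000000 in
/-- The quadratic polynomial `I₁ = x₅² + x₁² − x₁x₅ + 3x₇x₃ + 3x₈x₆ + 3x₂x₄` is
a joint invariant of the coadjoint representation of `sl(3, ℝ)`. -/
theorem sl3_coadjoint_invariant_I1 :
    ∀ k : Fin 8, ∀ x : Fin 8 → ℝ,
      vAct (sl3CoadX k)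
        (fun x => x 4 ^ 2 + x 0 ^ 2 - x 0 * x 4 + 3 * x 6 * x 2 +
          3 * x 7 * x 5 + 3 * x 1 * x 3) x = 0 := by
  intro k x
  have h0 : HasFDerivAt (fun x : Fin 8 → ℝ => x 0) (ContinuousLinearMap.proj 0 : (Fin 8 → ℝ) →L[ℝ] ℝ) x := by exact hasFDerivAt_apply 0 x
  have h1 : HasFDerivAt (fun x : Fin 8 → ℝ => x 1) (ContinuousLinearMap.proj 1 : (Fin 8 → ℝ) →L[ℝ] ℝ) x := by exact hasFDerivAt_apply 1 x
  have h2 : HasFDerivAt (fun x : Fin 8 → ℝ => x 2) (ContinuousLinearMap.proj 2 : (Fin 8 → ℝ) →L[ℝ] ℝ) x := by exact hasFDerivAt_apply 2 x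
  have h3 : HasFDerivAt (fun x : Fin 8 → ℝ => x 3) (ContinuousLinearMap.proj 3 : (Fin 8 → ℝ) →L[ℝ] ℝ) x := by exact hasFDerivAt_apply 3 x
  have h4 : HasFDerivAt (fun x : Fin 8 → ℝ => x 4) (ContinuousLinearMap.proj 4 : (Fin 8 → ℝ) →L[ℝ] ℝ) x := by exact hasFDerivAt_apply 4 x
  have h5 : HasFDerivAt (fun x : Fin 8 → ℝ => x 5) (ContinuousLinearMap.proj 5 : (Fin 8 → ℝ) →L[ℝ] ℝ) x := by exact hasFDerivAt_apply 5 x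
  have h6 : HasFDerivAt (fun x : Fin 8 → ℝ => x 6) (ContinuousLinearMap.proj 6 : (Fin 8 → ℝ) →L[ℝ] ℝ) x := by exact hasFDerivAt_apply 6 x
  have h7 : HasFDerivAt (fun x : Fin 8 → ℝ => x 7) (ContinuousLinearMap.proj 7 : (Fin 8 → ℝ) →L[ℝ] ℝ) x := by exact hasFDerivAt_apply 7 x
  have hf := (((((h4.mul h4).add (h0.mul h0)).sub (h0.mul h4)).add ((h6.const_mul 3).mul h2)).add ((h7.const_mul 3).mul h5)).add ((h1.const_mul 3).mul h3)
  have hfun : (fun x : Fin 8 → ℝ => x 4 ^ 2 + x 0 ^ 2 - x 0 * x 4 + 3 * x 6 * x 2 +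
      3 * x 7 * x 5 + 3 * x 1 * x 3) = (fun x : Fin 8 → ℝ =>
      x 4 * x 4 + x 0 * x 0 - x 0 * x 4 + 3 * x 6 * x 2 + 3 * x 7 * x 5 + 3 * x 1 * x 3) := by
    funext y; ring
  show fderiv ℝ _ x (sl3CoadX k x) = 0
  rw [hfun, HasFDerivAt.fderiv (f := fun x : Fin 8 → ℝ =>
      x 4 * x 4 + x 0 * x 0 - x 0 * x 4 + 3 * x 6 * x 2 + 3 * x 7 * x 5 + 3 * x 1 * x 3) hf]
  simp only [ContinuousLinearMap.add_apply, ContinuousLinearMap.sub_apply,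
    ContinuousLinearMap.coe_smul', Pi.smul_apply, ContinuousLinearMap.proj_apply,
    smul_eq_mul]
  fin_cases k <;>
    simp only [sl3CoadX, vec8_0, vec8_1, vec8_2, vec8_3, vec8_4, vec8_5, vec8_6, vec8_7,
      vec8_0m, vec8_1m, vec8_2m, vec8_3m, vec8_4m, vec8_5m, vec8_6m, vec8_7m] <;>
    ring
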